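/- If B is a self-adjoint positive definite operator on a finite-dimensional inner product space with smallest eigenvalue λ_min > 0 and σ > 0, then the operator norm of id − B(B + σ·id)⁻¹ equals σ/(λ_min + σ), and the operator norm of B(B + σ·id)⁻¹ is at most 1. -/

import Mathlib

open scoped RealInnerProductSpace

/-- For a self-adjoint positive definite operator B with smallest eigenvalue
λ_min > 0 and σ > 0, the operator norm of id − B(B+σ id)⁻¹ equals
σ/(λ_min+σ), and the operator norm of B(B+σ id)⁻¹ is at most 1. -/
theorem norm_regularized_resolvent
    {Y : Type*} [NormedAddCommGroup Y] [InnerProductSpace ℝ Y]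
    [FiniteDimensional ℝ Y]
    (B : Y →L[ℝ] Y)
    (hself : ContinuousLinearMap.adjoint B = B)
    (hpos : ∀ y : Y, y ≠ 0 → 0 < ⟪B y, y⟫)
    (lammin σ : ℝ) (hlam_pos : 0 < lammin) (hσ : 0 < σ)
    (hlam_lb : ∀ y : Y, lammin * ‖y‖ ^ 2 ≤ ⟪B y, y⟫)
    (hlam_eig : ∃ y : Y, y ≠ 0 ∧ B y = lammin • y)
    (Binv : Y →L[ℝ] Y)
    (hBinv : (B + σ • ContinuousLinearMap.id ℝ Y).comp Binv =
      ContinuousLinearMap.id ℝ Y)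
    (hBinv' : Binv.comp (B + σ • ContinuousLinearMap.id ℝ Y) =
      ContinuousLinearMap.id ℝ Y) :
    ‖ContinuousLinearMap.id ℝ Y - B.comp Binv‖ = σ / (lammin + σ) ∧
    ‖B.comp Binv‖ ≤ 1 := by
  have hls : 0 < lammin + σ := by linarith
  -- pointwise identity: B (Binv x) + σ • Binv x = x
  have hpt : ∀ x : Y, B (Binv x) + σ • Binv x = x := by
    intro x
    have := congrArg (fun f : Y →L[ℝ] Y => f x) hBinv
    simpa using this
  have hpt' : ∀ x : Y, Binv (B x + σ • x) = x := by
    intro x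
    have := congrArg (fun f : Y →L[ℝ] Y => f x) hBinv'
    simpa using this
  -- inner product nonneg
  have hinn : ∀ u : Y, 0 ≤ ⟪B u, u⟫ := by
    intro u
    have := hlam_lb u
    nlinarith [sq_nonneg ‖u‖]
  -- lower bound: (lammin+σ) ‖u‖ ≤ ‖B u + σ•u‖
  have hlow : ∀ u : Y, (lammin + σ) * ‖u‖ ≤ ‖B u + σ • u‖ := by
    intro u
    rcases eq_or_ne u 0 with rfl | hu
    · simp
    · have h1 : (lammin + σ) * ‖u‖ ^ 2 ≤ ⟪B u + σ • u, u⟫ := by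
        rw [inner_add_left, real_inner_smul_left, real_inner_self_eq_norm_sq]
        have := hlam_lb u
        nlinarith
      have h2 : ⟪B u + σ • u, u⟫ ≤ ‖B u + σ • u‖ * ‖u‖ := real_inner_le_norm _ _
      have hun : 0 < ‖u‖ := norm_pos_iff.mpr hu
      have := h1.trans h2
      nlinarith
  -- ‖Binv x‖ ≤ ‖x‖ / (lammin+σ)
  have hBinv_le : ∀ x : Y, ‖Binv x‖ ≤ (lammin + σ)⁻¹ * ‖x‖ := by
    intro x
    have := hlow (Binv x)
    rw [hpt x] at this
    rw [inv_mul_eq_div, le_div_iff₀ hls]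
    nlinarith
  have hnorm_le : ‖Binv‖ ≤ (lammin + σ)⁻¹ :=
    Binv.opNorm_le_bound (by positivity) hBinv_le
  -- eigenvector gives lower bound
  obtain ⟨y, hy0, hy⟩ := hlam_eig
  have hBy : Binv y = (lammin + σ)⁻¹ • y := by
    have := hpt' y
    rw [hy, ← add_smul] at this
    have h2 : Binv ((lammin + σ) • y) = y := this
    rw [map_smul] at h2
    have : (lammin + σ)⁻¹ • ((lammin + σ) • Binv y) = (lammin + σ)⁻¹ • y := by
      rw [h2]
    rwa [smul_smul, inv_mul_cancel₀ hls.ne', one_smul] at this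
  have hyn : 0 < ‖y‖ := norm_pos_iff.mpr hy0
  have hnorm_ge : (lammin + σ)⁻¹ ≤ ‖Binv‖ := by
    have h := Binv.le_opNorm y
    rw [hBy, norm_smul, Real.norm_eq_abs, abs_of_pos (by positivity)] at h
    have := (mul_le_mul_iff_of_pos_right hyn).mp h
    exact this
  have hnorm : ‖Binv‖ = (lammin + σ)⁻¹ := le_antisymm hnorm_le hnorm_ge
  constructor
  · have hid : ContinuousLinearMap.id ℝ Y - B.comp Binv = σ • Binv := by
      ext x
      simp only [ContinuousLinearMap.sub_apply, ContinuousLinearMap.coe_id',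
        id_eq, ContinuousLinearMap.coe_comp', Function.comp_apply,
        ContinuousLinearMap.coe_smul', Pi.smul_apply]
      rw [sub_eq_iff_eq_add']
      exact (hpt x).symm
    rw [hid, norm_smul σ Binv, Real.norm_eq_abs, abs_of_pos hσ, hnorm,
      div_eq_mul_inv]
  · apply ContinuousLinearMap.opNorm_le_bound _ zero_le_one
    intro x
    rw [one_mul]
    have hx : x = B (Binv x) + σ • Binv x := (hpt x).symm
    set u := Binv x with hu
    have hsq : ‖B u‖ ^ 2 ≤ ‖B u + σ • u‖ ^ 2 := by
      rw [@norm_add_sq_real, real_inner_smul_right, norm_smul,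
        Real.norm_eq_abs, abs_of_pos hσ]
      have := hinn u
      nlinarith [sq_nonneg (σ * ‖u‖)]
    have : ‖B u‖ ≤ ‖B u + σ • u‖ := by
      nlinarith [norm_nonneg (B u), norm_nonneg (B u + σ • u), hsq]
    calc ‖(B.comp Binv) x‖ = ‖B u‖ := rfl
      _ ≤ ‖B u + σ • u‖ := this
      _ = ‖x‖ := by rw [← hx]
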